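/- Let a, σ > 0, b ≥ 0, τ > 0, let t₀ ≤ T − τ, and let α : [t₀,T] → ℝ be a continuous function. Then there exists a unique continuous function β : [t₀,T] → ℝ such that β(T) = 1, β is differentiable on [T−τ, T] with β′(t) = (σ²·α(t) + a)·β(t) there, and β is differentiable on [t₀, T−τ] with β′(t) = (σ²·α(t) + a)·β(t) − b·β(t+τ) there (one-sided derivatives at the endpoints and at T−τ). Moreover β(t) > 0 for all t ∈ [t₀,T], and β satisfies the explicit formulas: β(t) = exp( − ∫ₜ^T (σ²·α(u) + a) du ) for t ∈ [T−τ, T], and β(t) = exp( − ∫ₜ^T (σ²·α(u) + a) du ) + b·∫ₜ^{T−τ} exp( − ∫ₜ^s (σ²·α(u) + a) du )·β(s+τ) ds for t ∈ [t₀, T−τ]. -/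

import Mathlib

open intervalIntegral Set

noncomputable def betaIter (b τ T : ℝ) (g : ℝ → ℝ) : ℕ → ℝ → ℝ
  | 0 => fun t => Real.exp (-∫ u in t..T, g u)
  | n + 1 => fun t => Real.exp (-∫ u in t..T, g u) *
      (1 + b * ∫ s in (min t (T - τ))..(T - τ),
        Real.exp (∫ u in s..T, g u) * betaIter b τ T g n (s + τ))

variable {b τ T : ℝ} {g : ℝ → ℝ}

lemma hasDerivAt_intleft (hg : Continuous g) (c t : ℝ) :
    HasDerivAt (fun t => ∫ u in t..c, g u) (-(g t)) t :=
  intervalIntegral.integral_hasDerivAt_left (hg.intervalIntegrable t c)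
    (hg.stronglyMeasurableAtFilter _ _) hg.continuousAt

lemma cont_intleft (hg : Continuous g) (c : ℝ) :
    Continuous (fun t => ∫ u in t..c, g u) :=
  continuous_iff_continuousAt.2 fun t => (hasDerivAt_intleft hg c t).continuousAt

lemma betaIter_cont (hg : Continuous g) : ∀ n, Continuous (betaIter b τ T g n) := by
  intro n
  induction n with
  | zero =>
    exact Real.continuous_exp.comp (cont_intleft hg T).neg
  | succ n ih =>
    simp only [betaIter]
    apply (Real.continuous_exp.comp (cont_intleft hg T).neg).mul
    apply continuous_const.add
    apply continuous_const.mul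
    have hφ : Continuous fun s => Real.exp (∫ u in s..T, g u) * betaIter b τ T g n (s + τ) :=
      (Real.continuous_exp.comp (cont_intleft hg T)).mul
        (ih.comp (continuous_id.add continuous_const))
    exact (continuous_iff_continuousAt.2 fun t =>
      (hasDerivAt_intleft hφ (T - τ) t).continuousAt).comp
      (continuous_id.min continuous_const)

lemma betaIter_pos (hg : Continuous g) (hb : 0 ≤ b) :
    ∀ n t, 0 < betaIter b τ T g n t := by
  intro n
  induction n with
  | zero => intro t; exact Real.exp_pos _
  | succ n ih =>
    intro t
    simp only [betaIter]
    apply mul_pos (Real.exp_pos _)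
    have hI : 0 ≤ ∫ s in (min t (T - τ))..(T - τ),
        Real.exp (∫ u in s..T, g u) * betaIter b τ T g n (s + τ) := by
      apply intervalIntegral.integral_nonneg (min_le_right _ _)
      intro u _
      exact le_of_lt (mul_pos (Real.exp_pos _) (ih _))
    nlinarith

lemma betaIter_succ (hg : Continuous g) (hτ : 0 < τ) :
    ∀ (n : ℕ) (t : ℝ), T - ((n : ℝ) + 1) * τ ≤ t →
      betaIter b τ T g (n + 1) t = betaIter b τ T g n t := by
  intro n
  induction n with
  | zero =>
    intro t ht
    have hmin : min t (T - τ) = T - τ := min_eq_right (by push_cast at ht; linarith)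
    simp [betaIter, hmin]
  | succ n ih =>
    intro t ht
    have hint : (∫ s in (min t (T - τ))..(T - τ),
          Real.exp (∫ u in s..T, g u) * betaIter b τ T g (n + 1) (s + τ)) =
        ∫ s in (min t (T - τ))..(T - τ),
          Real.exp (∫ u in s..T, g u) * betaIter b τ T g n (s + τ) := by
      apply intervalIntegral.integral_congr
      intro s hs
      rw [Set.uIcc_of_le (min_le_right _ _)] at hs
      obtain ⟨h1, h2⟩ := hs
      have hn : (0:ℝ) ≤ (n : ℝ) := Nat.cast_nonneg n
      have h3 : T - ((n : ℝ) + 2) * τ ≤ min t (T - τ) := by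
        refine le_min ?_ (by nlinarith)
        push_cast at ht; linarith
      have hs' : T - ((n : ℝ) + 1) * τ ≤ s + τ := by
        have := h3.trans h1
        push_cast
        linarith
      simp only [ih (s + τ) hs']
    conv_lhs => rw [betaIter]
    conv_rhs => rw [betaIter]
    simp only [hint]



/-- The linear delayed system satisfied by the w-derivative β of the Riccati
coefficient in the fixed delay CIR term structure: β is continuous on [t₀,T],
β(T) = 1, β′ = (σ²α + a)β on [T−τ,T] and β′ = (σ²α + a)β − b·β(·+τ) on [t₀,T−τ]
(one-sided derivatives at the endpoints and at T−τ). -/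
def IsBetaSol (a b σ τ t₀ T : ℝ) (α β : ℝ → ℝ) : Prop :=
  ContinuousOn β (Set.Icc t₀ T) ∧ β T = 1 ∧
  (∀ t ∈ Set.Icc (T - τ) T, HasDerivWithinAt β
    ((σ ^ 2 * α t + a) * β t) (Set.Icc (T - τ) T) t) ∧
  (∀ t ∈ Set.Icc t₀ (T - τ), HasDerivWithinAt β
    ((σ ^ 2 * α t + a) * β t - b * β (t + τ)) (Set.Icc t₀ (T - τ)) t)

/-- existence, uniqueness, positivity and explicit formulas for the
solution of the linear delayed equation β′ = (σ²α + a)β (resp. minus b·β(·+τ))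
with β(T) = 1. -/
theorem beta_linear_delayed_system
    (a b σ τ t₀ T : ℝ) (ha : 0 < a) (hσ : 0 < σ) (hb : 0 ≤ b) (hτ : 0 < τ)
    (ht₀ : t₀ ≤ T - τ)
    (α : ℝ → ℝ) (hα : ContinuousOn α (Set.Icc t₀ T)) :
    ∃ β : ℝ → ℝ,
      IsBetaSol a b σ τ t₀ T α β ∧
      (∀ β' : ℝ → ℝ, IsBetaSol a b σ τ t₀ T α β' →
        ∀ t ∈ Set.Icc t₀ T, β' t = β t) ∧
      (∀ t ∈ Set.Icc t₀ T, 0 < β t) ∧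
      (∀ t ∈ Set.Icc (T - τ) T,
        β t = Real.exp (-∫ u in t..T, (σ ^ 2 * α u + a))) ∧
      (∀ t ∈ Set.Icc t₀ (T - τ),
        β t = Real.exp (-∫ u in t..T, (σ ^ 2 * α u + a)) +
          b * ∫ s in t..(T - τ),
            Real.exp (-∫ u in t..s, (σ ^ 2 * α u + a)) * β (s + τ)) := by
  have hτT : t₀ ≤ T := by linarith
  have hcT : T - τ ≤ T := by linarith
  set g : ℝ → ℝ := fun u => σ ^ 2 * Set.IccExtend hτT ((Set.Icc t₀ T).restrict α) u + a
    with hgdef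
  have hg : Continuous g :=
    (continuous_const.mul (hα.restrict.Icc_extend')).add continuous_const
  have hg_eq : ∀ u ∈ Set.Icc t₀ T, g u = σ ^ 2 * α u + a := by
    intro u hu
    simp only [hgdef, Set.IccExtend_of_mem _ _ hu, Set.restrict_apply]; rfl
  set A : ℝ → ℝ := fun t => ∫ u in t..T, g u with hAdef
  have hA : ∀ t, HasDerivAt A (-(g t)) t := fun t => hasDerivAt_intleft hg T t
  have hAc : Continuous A := cont_intleft hg T
  set E : ℝ → ℝ := fun t => Real.exp (-A t) with hEdef
  have hE : ∀ t, HasDerivAt E (g t * E t) t := by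
    intro t
    have h1 : HasDerivAt (fun t => -A t) (g t) t := by have h := (hA t).neg; rw [neg_neg] at h; exact h
    simpa [hEdef, mul_comm] using h1.exp
  obtain ⟨M, hM⟩ := exists_nat_ge ((T - t₀) / τ)
  have hMτ : T - t₀ ≤ M * τ := by rw [div_le_iff₀ hτ] at hM; linarith
  have hMt₀ : T - ((M : ℝ) + 1) * τ ≤ t₀ := by nlinarith
  set β : ℝ → ℝ := betaIter b τ T g (M + 1) with hβdef
  set φ : ℝ → ℝ := fun s => Real.exp (A s) * betaIter b τ T g M (s + τ) with hφdef
  set P : ℝ → ℝ := fun x => ∫ s in x..(T - τ), φ s with hPdef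
  have hβM_cont : Continuous (betaIter b τ T g M) := betaIter_cont hg M
  have hφc : Continuous φ := by
    rw [hφdef]
    exact (Real.continuous_exp.comp hAc).mul
      (hβM_cont.comp (continuous_id.add continuous_const))
  have hP : ∀ t, HasDerivAt P (-(φ t)) t := fun t => hasDerivAt_intleft hφc (T - τ) t
  have hβval : ∀ t, β t = E t * (1 + b * P (min t (T - τ))) := by
    intro t
    rw [hβdef]
    conv_lhs => rw [betaIter]
  have hβ_up : ∀ t, T - τ ≤ t → β t = E t := by
    intro t ht
    rw [hβval t, min_eq_right ht]
    have : P (T - τ) = 0 := by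
      rw [hPdef]; exact intervalIntegral.integral_same
    rw [this]; ring
  have hβ_low : ∀ t, t ≤ T - τ → β t = E t * (1 + b * P t) := by
    intro t ht; rw [hβval t, min_eq_left ht]
  have hβshift : ∀ t, t₀ ≤ t → β (t + τ) = betaIter b τ T g M (t + τ) := by
    intro t ht
    exact betaIter_succ hg hτ M (t + τ) (by push_cast; linarith)
  have hβ_cont : Continuous β := betaIter_cont hg (M + 1)
  have hβT : β T = 1 := by
    rw [hβ_up T hcT, hEdef]
    simp [hAdef, intervalIntegral.integral_same]
  have hd1 : ∀ t ∈ Set.Icc (T - τ) T, HasDerivWithinAt β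
      ((σ ^ 2 * α t + a) * β t) (Set.Icc (T - τ) T) t := by
    intro t ht
    have h1 : HasDerivWithinAt β (g t * E t) (Set.Icc (T - τ) T) t :=
      (hE t).hasDerivWithinAt.congr (fun x hx => hβ_up x hx.1) (hβ_up t ht.1)
    have h2 : (σ ^ 2 * α t + a) * β t = g t * E t := by
      rw [← hg_eq t ⟨le_trans ht₀ ht.1, ht.2⟩, hβ_up t ht.1]
    rw [h2]; exact h1
  have hd2 : ∀ t ∈ Set.Icc t₀ (T - τ), HasDerivWithinAt β
      ((σ ^ 2 * α t + a) * β t - b * β (t + τ)) (Set.Icc t₀ (T - τ)) t := by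
    intro t ht
    have hder : HasDerivAt (fun x => E x * (1 + b * P x))
        (g t * E t * (1 + b * P t) + E t * (b * -(φ t))) t := by
      have h := (hE t).mul ((hasDerivAt_const t (1:ℝ)).add ((hP t).const_mul b))
      exact h.congr_deriv (by simp only [Pi.add_apply]; ring)
    have h1 : HasDerivWithinAt β (g t * E t * (1 + b * P t) + E t * (b * -(φ t)))
        (Set.Icc t₀ (T - τ)) t :=
      hder.hasDerivWithinAt.congr (fun x hx => hβ_low x hx.2) (hβ_low t ht.2)
    have hexp1 : E t * Real.exp (A t) = 1 := by
      rw [hEdef]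
      simp only [← Real.exp_add]
      simp
    have h2 : (σ ^ 2 * α t + a) * β t - b * β (t + τ) =
        g t * E t * (1 + b * P t) + E t * (b * -(φ t)) := by
      rw [← hg_eq t ⟨ht.1, le_trans ht.2 hcT⟩, hβ_low t ht.2, hβshift t ht.1]
      simp only [hφdef]
      linear_combination (b * betaIter b τ T g M (t + τ)) * hexp1
    rw [h2]; exact h1
  have hint_congr : ∀ x y, t₀ ≤ x → x ≤ y → y ≤ T →
      (∫ u in x..y, (σ ^ 2 * α u + a)) = ∫ u in x..y, g u := by
    intro x y hx hxy hyT
    apply intervalIntegral.integral_congr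
    intro u hu
    rw [Set.uIcc_of_le hxy] at hu
    exact (hg_eq u ⟨le_trans hx hu.1, le_trans hu.2 hyT⟩).symm
  have form1 : ∀ t ∈ Set.Icc (T - τ) T,
      β t = Real.exp (-∫ u in t..T, (σ ^ 2 * α u + a)) := by
    intro t ht
    rw [hβ_up t ht.1, hint_congr t T (le_trans ht₀ ht.1) ht.2 le_rfl, hEdef]
  have form2 : ∀ t ∈ Set.Icc t₀ (T - τ),
      β t = Real.exp (-∫ u in t..T, (σ ^ 2 * α u + a)) +
        b * ∫ s in t..(T - τ),
          Real.exp (-∫ u in t..s, (σ ^ 2 * α u + a)) * β (s + τ) := by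
    intro t ht
    have e1 : Real.exp (-∫ u in t..T, (σ ^ 2 * α u + a)) = E t := by
      rw [hint_congr t T ht.1 (le_trans ht.2 hcT) le_rfl, hEdef]
    have e2 : (∫ s in t..(T - τ),
        Real.exp (-∫ u in t..s, (σ ^ 2 * α u + a)) * β (s + τ)) = E t * P t := by
      rw [hPdef]
      simp only
      rw [← intervalIntegral.integral_const_mul]
      apply intervalIntegral.integral_congr
      intro s hs
      rw [Set.uIcc_of_le ht.2] at hs
      have hs1 : t₀ ≤ s := le_trans ht.1 hs.1
      have hsT : s ≤ T := le_trans hs.2 hcT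
      have h4 : (∫ u in t..s, g u) + (∫ u in s..T, g u) = ∫ u in t..T, g u :=
        intervalIntegral.integral_add_adjacent_intervals
          (hg.intervalIntegrable t s) (hg.intervalIntegrable s T)
      show Real.exp (-∫ u in t..s, (σ ^ 2 * α u + a)) * β (s + τ) = E t * φ s
      rw [hint_congr t s ht.1 hs.1 hsT, hβshift s hs1]
      simp only [hφdef]
      have h5 : Real.exp (-∫ u in t..s, g u) = E t * Real.exp (A s) := by
        rw [hEdef]
        simp only [← Real.exp_add]
        congr 1
        simp only [hAdef]
        linarith [h4]
      rw [h5]; ring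
    rw [hβ_low t ht.2, e2, e1]; ring
  have huniq : ∀ β' : ℝ → ℝ, IsBetaSol a b σ τ t₀ T α β' →
      ∀ t ∈ Set.Icc t₀ T, β' t = β t := by
    intro β' hβ'
    obtain ⟨hc', hT1', hd1', hd2'⟩ := hβ'
    set δ : ℝ → ℝ := fun t => β' t - β t with hδdef
    have hδc : ContinuousOn δ (Set.Icc t₀ T) := hc'.sub hβ_cont.continuousOn
    have hδT : δ T = 0 := by simp [hδdef, hT1', hβT]
    have key : ∀ k : ℕ, ∀ t, max t₀ (T - (k : ℝ) * τ) ≤ t → t ≤ T → δ t = 0 := by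
      intro k
      induction k with
      | zero =>
        intro t h1 h2
        have h3 : T - (0 : ℝ) * τ ≤ t := le_trans (le_max_right _ _) (by exact_mod_cast h1)
        have ht : t = T := le_antisymm h2 (by linarith)
        rw [ht]; exact hδT
      | succ k ih =>
        intro t h1 h2
        push_cast at h1
        set c := max t₀ (T - ((k : ℝ) + 1) * τ) with hcdef
        set d := max t₀ (T - (k : ℝ) * τ) with hddef
        have hkτ : (0 : ℝ) ≤ (k : ℝ) * τ := by positivity
        have hcd : c ≤ d := max_le_max le_rfl (by linarith)
        have hdT : d ≤ T := max_le hτT (by linarith)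
        have hct₀ : t₀ ≤ c := le_max_left _ _
        by_cases hcase0 : d ≤ t
        · exact ih t hcase0 h2
        push_neg at hcase0
        set F : ℝ → ℝ := fun x => δ x * Real.exp (A x) with hFdef
        have hFcont : ContinuousOn F (Set.Icc c d) :=
          (hδc.mono (Set.Icc_subset_Icc hct₀ hdT)).mul
            ((Real.continuous_exp.comp hAc).continuousOn)
        have hder : ∀ x ∈ Set.Ico c d, HasDerivWithinAt F 0 (Set.Ici x) x := by
          intro x hx
          have hx0 : t₀ ≤ x := le_trans hct₀ hx.1
          have hxT : x ≤ T := le_of_lt (lt_of_lt_of_le hx.2 hdT)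
          have hδx : HasDerivWithinAt δ ((σ ^ 2 * α x + a) * δ x) (Set.Ici x) x := by
            by_cases hc2 : T - τ ≤ x
            · have hmem : Set.Icc (T - τ) T ∈ nhdsWithin x (Set.Ici x) :=
                Icc_mem_nhdsGE_of_mem ⟨hc2, lt_of_lt_of_le hx.2 hdT⟩
              have hdd := ((hd1' x ⟨hc2, hxT⟩).sub (hd1 x ⟨hc2, hxT⟩)).mono_of_mem_nhdsWithin hmem
              refine hdd.congr_deriv ?_
              simp only [hδdef]; ring
            · push_neg at hc2
              have hmem : Set.Icc t₀ (T - τ) ∈ nhdsWithin x (Set.Ici x) :=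
                Icc_mem_nhdsGE_of_mem ⟨hx0, hc2⟩
              have hδsh : δ (x + τ) = 0 := by
                apply ih (x + τ)
                · apply max_le
                  · linarith
                  · have hcx : T - ((k : ℝ) + 1) * τ ≤ x := le_trans (le_max_right _ _) hx.1
                    linarith
                · linarith
              have hdd := ((hd2' x ⟨hx0, hc2.le⟩).sub (hd2 x ⟨hx0, hc2.le⟩)).mono_of_mem_nhdsWithin hmem
              have hsh2 : β' (x + τ) = β (x + τ) := by
                have := hδsh; simp only [hδdef] at this; linarith
              refine hdd.congr_deriv ?_
              simp only [hδdef, hsh2]; ring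
          have := hδx.mul ((hA x).exp).hasDerivWithinAt
          refine this.congr_deriv ?_
          rw [← hg_eq x ⟨hx0, hxT⟩]
          ring
        have hall := constant_of_has_deriv_right_zero hFcont hder
        have hdd0 : δ d = 0 := ih d (le_refl d) hdT
        have hFd : F d = 0 := by simp [hFdef, hdd0]
        have hFc0 : F c = 0 := by
          have h5 := hall d ⟨hcd, le_rfl⟩
          rw [hFd] at h5; linarith
        have hFt : F t = 0 := by
          have h5 := hall t ⟨h1, hcase0.le⟩
          rw [h5, hFc0]
        have hδt : δ t * Real.exp (A t) = 0 := by
          rw [hFdef] at hFt; exact hFt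
        exact (mul_eq_zero.mp hδt).resolve_right (Real.exp_ne_zero _)
    intro t ht
    obtain ⟨k, hk⟩ := exists_nat_ge ((T - t₀) / τ)
    have hk2 : T - (k : ℝ) * τ ≤ t₀ := by rw [div_le_iff₀ hτ] at hk; linarith
    have h0 : δ t = 0 := key k t (max_le ht.1 (le_trans hk2 ht.1)) ht.2
    simp only [hδdef] at h0; linarith
  exact ⟨β, ⟨hβ_cont.continuousOn, hβT, hd1, hd2⟩, huniq,
    fun t _ => betaIter_pos hg hb (M + 1) t, form1, form2⟩
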